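/- arXiv:1309.1219 — 2 statements merged into one kernel-verified Lean document; each statement's English description precedes it below -/
import Mathlib

section
/- Let K, K' be Hilbert spaces and U : K → K' a unitary (or more generally invertible bounded) operator. Then {x_i, V_i}_{i∈I} is a frame of subspaces for K if and only if {x_i, U V_i}_{i∈I} is a frame of subspaces for K'. -/
/-- For a unitary `U : K → K'`, `{x_i, V_i}` is a frame of subspaces
for `K` iff `{x_i, U V_i}` is a frame of subspaces for `K'`. -/
theorem frame_of_subspaces_iff_unitary_image
    {K K' : Type*} [NormedAddCommGroup K] [InnerProductSpace ℂ K] [CompleteSpace K]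
    [NormedAddCommGroup K'] [InnerProductSpace ℂ K'] [CompleteSpace K']
    {I : Type*} (U : K ≃ₗᵢ[ℂ] K')
    (V : I → Submodule ℂ K) [∀ i, CompleteSpace (V i)]
    [∀ i, CompleteSpace ((V i).map U.toLinearEquiv.toLinearMap)]
    (x : I → ℝ) (hx_pos : ∀ i, 0 < x i) (hx_bdd : ∃ M : ℝ, ∀ i, x i ≤ M) :
    (∃ A B : ℝ, 0 < A ∧ 0 < B ∧ ∀ k : K,
        A * ‖k‖ ^ 2 ≤ (∑' i, (x i) ^ 2 * ‖(Submodule.orthogonalProjectionOnto (V i) k : K)‖ ^ 2) ∧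
        (∑' i, (x i) ^ 2 * ‖(Submodule.orthogonalProjectionOnto (V i) k : K)‖ ^ 2) ≤ B * ‖k‖ ^ 2)
    ↔ (∃ A B : ℝ, 0 < A ∧ 0 < B ∧ ∀ k' : K',
        A * ‖k'‖ ^ 2 ≤
          (∑' i, (x i) ^ 2 *
            ‖(Submodule.orthogonalProjectionOnto ((V i).map U.toLinearEquiv.toLinearMap) k' : K')‖ ^ 2) ∧
        (∑' i, (x i) ^ 2 *
            ‖(Submodule.orthogonalProjectionOnto ((V i).map U.toLinearEquiv.toLinearMap) k' : K')‖ ^ 2)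
          ≤ B * ‖k'‖ ^ 2) := by
  have hnorm : ∀ (i : I) (k' : K'),
      ‖(Submodule.orthogonalProjectionOnto ((V i).map U.toLinearEquiv.toLinearMap) k' : K')‖
        = ‖(Submodule.orthogonalProjectionOnto (V i) (U.symm k') : K)‖ := by
    intro i k'
    rw [← Submodule.starProjection_apply, ← Submodule.starProjection_apply,
      Submodule.starProjection_map_apply U (V i) k', U.norm_map]
  constructor
  · rintro ⟨A, B, hA, hB, h⟩
    refine ⟨A, B, hA, hB, fun k' => ?_⟩
    have := h (U.symm k')
    simpa only [hnorm, U.symm.norm_map] using this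
  · rintro ⟨A, B, hA, hB, h⟩
    refine ⟨A, B, hA, hB, fun k => ?_⟩
    have := h (U k)
    simpa only [hnorm, U.norm_map, U.symm_apply_apply] using this
end

section
/- Let K be a Hilbert space, I an index set, {J_i}_{i∈I} a partition of a set of indices, and for each i let {k_{i,j}}_{j∈J_i} be a frame for the closed subspace V_i = closure of span{k_{i,j} : j ∈ J_i} with frame bounds A_i, B_i satisfying 0 < A = inf_i A_i and B = sup_i B_i < ∞. Fix weights (x_i) ∈ ℓ^∞₊(I). Then {x_i k_{i,j}}_{i∈I, j∈J_i} is a frame for K if and only if {x_i, V_i}_{i∈I} is a frame of subspaces for K. -/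
/-- Given a partition `I = ⊔ J_i` and, for each `i`, a frame
`{k_{i,j}}_{j ∈ J_i}` for the closed subspace `V_i = closure (span {k_{i,j}})` with
uniform frame bounds `0 < A ≤ B`, and weights `(x_i) ∈ ℓ^∞₊(I)`:
`{x_i k_{i,j}}_{i,j}` is a frame for `K` iff `{x_i, V_i}` is a frame of subspaces
for `K`. -/
theorem frame_iff_frame_of_subspaces
    {K : Type*} [NormedAddCommGroup K] [InnerProductSpace ℂ K] [CompleteSpace K]
    {I : Type*} {Jd : I → Type*}
    (k : ∀ i, Jd i → K)
    (V : I → Submodule ℂ K) [∀ i, CompleteSpace (V i)]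
    (hV : ∀ i, V i = (Submodule.span ℂ (Set.range (k i))).topologicalClosure)
    (x : I → ℝ) (hx_pos : ∀ i, 0 < x i) (hx_bdd : ∃ M : ℝ, ∀ i, x i ≤ M)
    (A B : ℝ) (hA : 0 < A) (hAB : A ≤ B)
    (hlocal : ∀ i, ∀ v ∈ V i,
      A * ‖v‖ ^ 2 ≤ (∑' j, ‖(inner ℂ v (k i j) : ℂ)‖ ^ 2) ∧
      (∑' j, ‖(inner ℂ v (k i j) : ℂ)‖ ^ 2) ≤ B * ‖v‖ ^ 2) :
    (∃ C D : ℝ, 0 < C ∧ 0 < D ∧ ∀ f : K,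
        C * ‖f‖ ^ 2 ≤
          (∑' p : Σ i, Jd i, ‖(inner ℂ f (((x p.1 : ℂ)) • k p.1 p.2) : ℂ)‖ ^ 2) ∧
        (∑' p : Σ i, Jd i, ‖(inner ℂ f (((x p.1 : ℂ)) • k p.1 p.2) : ℂ)‖ ^ 2)
          ≤ D * ‖f‖ ^ 2)
    ↔ (∃ C D : ℝ, 0 < C ∧ 0 < D ∧ ∀ f : K,
        C * ‖f‖ ^ 2 ≤ (∑' i, (x i) ^ 2 * ‖((V i).orthogonalProjection f : K)‖ ^ 2) ∧
        (∑' i, (x i) ^ 2 * ‖((V i).orthogonalProjection f : K)‖ ^ 2) ≤ D * ‖f‖ ^ 2) := by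
  have hB : 0 < B := lt_of_lt_of_le hA hAB
  have hkmem : ∀ i j, k i j ∈ V i := by
    intro i j
    rw [hV i]
    exact Submodule.le_topologicalClosure _ (Submodule.subset_span ⟨j, rfl⟩)
  have hinner : ∀ (f : K) i j,
      (inner ℂ f (k i j) : ℂ) = inner ℂ (((V i).orthogonalProjection f : K)) (k i j) := by
    intro f i j
    have h0 := (V i).starProjection_inner_eq_zero f (k i j) (hkmem i j)
    rw [inner_sub_left] at h0
    exact sub_eq_zero.mp h0
  have hsm : ∀ (f : K) i j,
      ‖(inner ℂ f (((x i : ℂ)) • k i j) : ℂ)‖ ^ 2 = x i ^ 2 * ‖(inner ℂ f (k i j) : ℂ)‖ ^ 2 := by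
    intro f i j
    rw [inner_smul_right, norm_mul, mul_pow, Complex.norm_real, Real.norm_eq_abs, sq_abs]
  -- core estimate
  have core : ∀ f : K,
      (Summable (fun p : Σ i, Jd i => ‖(inner ℂ f (((x p.1 : ℂ)) • k p.1 p.2) : ℂ)‖ ^ 2) ∨
       Summable (fun i => (x i) ^ 2 * ‖((V i).orthogonalProjection f : K)‖ ^ 2)) →
      Summable (fun p : Σ i, Jd i => ‖(inner ℂ f (((x p.1 : ℂ)) • k p.1 p.2) : ℂ)‖ ^ 2) ∧
      Summable (fun i => (x i) ^ 2 * ‖((V i).orthogonalProjection f : K)‖ ^ 2) ∧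
      A * (∑' i, (x i) ^ 2 * ‖((V i).orthogonalProjection f : K)‖ ^ 2) ≤
        (∑' p : Σ i, Jd i, ‖(inner ℂ f (((x p.1 : ℂ)) • k p.1 p.2) : ℂ)‖ ^ 2) ∧
      (∑' p : Σ i, Jd i, ‖(inner ℂ f (((x p.1 : ℂ)) • k p.1 p.2) : ℂ)‖ ^ 2) ≤
        B * (∑' i, (x i) ^ 2 * ‖((V i).orthogonalProjection f : K)‖ ^ 2) := by
    intro f hsum
    have hloc : ∀ i,
        A * ‖((V i).orthogonalProjection f : K)‖ ^ 2 ≤ (∑' j, ‖(inner ℂ f (k i j) : ℂ)‖ ^ 2) ∧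
        (∑' j, ‖(inner ℂ f (k i j) : ℂ)‖ ^ 2) ≤ B * ‖((V i).orthogonalProjection f : K)‖ ^ 2 := by
      intro i
      have h := hlocal i _ (SetLike.coe_mem ((V i).orthogonalProjection f))
      simp only [← hinner f i] at h
      exact h
    have hgsum : ∀ i, Summable (fun j => ‖(inner ℂ f (k i j) : ℂ)‖ ^ 2) := by
      intro i
      by_contra h
      have h0 := tsum_eq_zero_of_not_summable h
      have h1 := (hloc i).1
      rw [h0] at h1
      have hv0 : ((V i).orthogonalProjection f : K) = 0 := by
        have hs : ‖((V i).orthogonalProjection f : K)‖ ^ 2 ≤ 0 :=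
          le_of_mul_le_mul_left (by linarith) hA
        have hz : ‖((V i).orthogonalProjection f : K)‖ ^ 2 = 0 :=
          le_antisymm hs (by positivity)
        exact norm_eq_zero.mp ((pow_eq_zero_iff (two_ne_zero)).mp hz)
      apply h
      have heq : (fun j => ‖(inner ℂ f (k i j) : ℂ)‖ ^ 2) = fun _ => (0 : ℝ) := by
        funext j
        rw [hinner f i j, hv0, inner_zero_left]
        simp
      rw [heq]
      exact summable_zero
    have hjs : ∀ i, Summable (fun j => ‖(inner ℂ f (((x i : ℂ)) • k i j) : ℂ)‖ ^ 2) := by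
      intro i
      have := (hgsum i).mul_left (x i ^ 2)
      simpa only [← hsm] using this
    have hin : ∀ i,
        A * (x i ^ 2 * ‖((V i).orthogonalProjection f : K)‖ ^ 2) ≤
          (∑' j, ‖(inner ℂ f (((x i : ℂ)) • k i j) : ℂ)‖ ^ 2) ∧
        (∑' j, ‖(inner ℂ f (((x i : ℂ)) • k i j) : ℂ)‖ ^ 2) ≤
          B * (x i ^ 2 * ‖((V i).orthogonalProjection f : K)‖ ^ 2) := by
      intro i
      have h1 : (∑' j, ‖(inner ℂ f (((x i : ℂ)) • k i j) : ℂ)‖ ^ 2) =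
          x i ^ 2 * ∑' j, ‖(inner ℂ f (k i j) : ℂ)‖ ^ 2 := by
        simp_rw [hsm f i]
        exact tsum_mul_left
      rw [h1]
      constructor
      · nlinarith [(hloc i).1, sq_nonneg (x i)]
      · nlinarith [(hloc i).2, sq_nonneg (x i)]
    have ht0 : ∀ i, 0 ≤ (x i) ^ 2 * ‖((V i).orthogonalProjection f : K)‖ ^ 2 := by
      intro i; positivity
    have hφ0 : ∀ p : Σ i, Jd i, 0 ≤ ‖(inner ℂ f (((x p.1 : ℂ)) • k p.1 p.2) : ℂ)‖ ^ 2 := by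
      intro p; positivity
    have hboth : Summable (fun p : Σ i, Jd i => ‖(inner ℂ f (((x p.1 : ℂ)) • k p.1 p.2) : ℂ)‖ ^ 2) ∧
        Summable (fun i => (x i) ^ 2 * ‖((V i).orthogonalProjection f : K)‖ ^ 2) := by
      rcases hsum with h | h
      · refine ⟨h, ?_⟩
        have hh : Summable (fun i => ∑' j, ‖(inner ℂ f (((x i : ℂ)) • k i j) : ℂ)‖ ^ 2) := h.sigma
        refine Summable.of_nonneg_of_le ht0 (fun i => ?_) (hh.mul_left A⁻¹)
        calc (x i) ^ 2 * ‖((V i).orthogonalProjection f : K)‖ ^ 2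
            = A⁻¹ * (A * ((x i) ^ 2 * ‖((V i).orthogonalProjection f : K)‖ ^ 2)) := by
              field_simp
          _ ≤ A⁻¹ * ∑' j, ‖(inner ℂ f (((x i : ℂ)) • k i j) : ℂ)‖ ^ 2 :=
              mul_le_mul_of_nonneg_left (hin i).1 (by positivity)
      · refine ⟨?_, h⟩
        rw [summable_sigma_of_nonneg hφ0]
        refine ⟨hjs, Summable.of_nonneg_of_le (fun i => tsum_nonneg fun j => by positivity)
          (fun i => (hin i).2) (h.mul_left B)⟩
    obtain ⟨hφs, hts⟩ := hboth
    have hS : (∑' p : Σ i, Jd i, ‖(inner ℂ f (((x p.1 : ℂ)) • k p.1 p.2) : ℂ)‖ ^ 2) =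
        ∑' i, ∑' j, ‖(inner ℂ f (((x i : ℂ)) • k i j) : ℂ)‖ ^ 2 := Summable.tsum_sigma' hjs hφs
    have hhs : Summable (fun i => ∑' j, ‖(inner ℂ f (((x i : ℂ)) • k i j) : ℂ)‖ ^ 2) := hφs.sigma
    refine ⟨hφs, hts, ?_, ?_⟩
    · rw [hS, ← tsum_mul_left]
      exact Summable.tsum_le_tsum (fun i => (hin i).1) (hts.mul_left A) hhs
    · rw [hS]
      calc (∑' i, ∑' j, ‖(inner ℂ f (((x i : ℂ)) • k i j) : ℂ)‖ ^ 2)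
          ≤ ∑' i, B * ((x i) ^ 2 * ‖((V i).orthogonalProjection f : K)‖ ^ 2) :=
            Summable.tsum_le_tsum (fun i => (hin i).2) hhs (hts.mul_left B)
        _ = B * ∑' i, (x i) ^ 2 * ‖((V i).orthogonalProjection f : K)‖ ^ 2 := tsum_mul_left
  constructor
  · rintro ⟨C, D, hC, hD, hbd⟩
    refine ⟨C / B, D / A, by positivity, by positivity, fun f => ?_⟩
    by_cases hf : f = 0
    · subst hf
      simp
    · have h1 := hbd f
      have hfn : 0 < ‖f‖ := norm_pos_iff.mpr hf
      have hSsum : Summable (fun p : Σ i, Jd i =>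
          ‖(inner ℂ f (((x p.1 : ℂ)) • k p.1 p.2) : ℂ)‖ ^ 2) := by
        by_contra h
        rw [tsum_eq_zero_of_not_summable h] at h1
        nlinarith [h1.1, mul_pos hC (pow_pos hfn 2)]
      obtain ⟨-, -, h2, h3⟩ := core f (Or.inl hSsum)
      constructor
      · rw [div_mul_eq_mul_div, div_le_iff₀ hB]
        nlinarith [h1.1]
      · rw [div_mul_eq_mul_div, le_div_iff₀ hA]
        nlinarith [h1.2]
  · rintro ⟨C, D, hC, hD, hbd⟩
    refine ⟨C * A, D * B, mul_pos hC hA, mul_pos hD hB, fun f => ?_⟩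
    by_cases hf : f = 0
    · subst hf
      simp
    · have h1 := hbd f
      have hfn : 0 < ‖f‖ := norm_pos_iff.mpr hf
      have hTsum : Summable (fun i => (x i) ^ 2 * ‖((V i).orthogonalProjection f : K)‖ ^ 2) := by
        by_contra h
        rw [tsum_eq_zero_of_not_summable h] at h1
        nlinarith [h1.1, mul_pos hC (pow_pos hfn 2)]
      obtain ⟨-, -, h2, h3⟩ := core f (Or.inr hTsum)
      constructor
      · nlinarith [h1.1]
      · nlinarith [h1.2]
end
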